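/- arXiv:2111.10550 — 2 statements merged into one kernel-verified Lean document; each statement's English description precedes it below -/
import Mathlib

section
/- Let K > 0, T_c > 1, and a > 0 be real numbers (where a = cγK² combines the constant c = 0.7671·β_l, the transmit SNR γ, and the number of RIS elements K), and define f : (0, ∞) → ℝ by f(B) = (1 − (1 + K/B)/T_c) · (log(a/B) / log 2). Then for every B > 0, the derivative f′(B) = 0 if and only if K·(1 + log a) − K·log B = B·(T_c − 1), where log denotes the natural logarithm. -/
/-- Stationary-point equation for the high-SNR rate approximation
`f(B) = (1 - (1 + K/B)/T_c) · log₂(a/B)`: for `B > 0`, `f'(B) = 0` iff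
`K (1 + log a) - K log B = B (T_c - 1)`. -/
theorem stmt11 (K Tc a : ℝ) (hK : 0 < K) (hTc : 1 < Tc) (ha : 0 < a) :
    ∀ B : ℝ, 0 < B →
      (deriv (fun B : ℝ => (1 - (1 + K / B) / Tc) * (Real.log (a / B) / Real.log 2)) B = 0
        ↔ K * (1 + Real.log a) - K * Real.log B = B * (Tc - 1)) := by
  intro B hB
  have hB0 : B ≠ 0 := hB.ne'
  have hTc0 : (0:ℝ) < Tc := lt_trans zero_lt_one hTc
  have hlog2 : Real.log 2 ≠ 0 := by
    have := Real.log_pos (by norm_num : (1:ℝ) < 2); linarith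
  -- derivative of the first factor
  have h1 : HasDerivAt (fun x : ℝ => 1 - (1 + K / x) / Tc)
      (-(-(K) / B ^ 2 / Tc)) B := by
    have : HasDerivAt (fun x : ℝ => K / x) (-(K) / B ^ 2) B := by
      simpa [div_eq_mul_inv, neg_div, mul_comm] using (hasDerivAt_inv hB0).const_mul K
    simpa using (((this.const_add 1).div_const Tc).const_sub 1)
  -- derivative of the second factor
  have h2 : HasDerivAt (fun x : ℝ => Real.log (a / x) / Real.log 2)
      ((B / a * (-(a) / B ^ 2)) / Real.log 2) B := by
    have hd : HasDerivAt (fun x : ℝ => a / x) (-(a) / B ^ 2) B := by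
      simpa [div_eq_mul_inv, neg_div, mul_comm] using (hasDerivAt_inv hB0).const_mul a
    have hlog : HasDerivAt Real.log (a / B)⁻¹ (a / B) :=
      Real.hasDerivAt_log (div_ne_zero ha.ne' hB0)
    have := (hlog.comp B hd).div_const (Real.log 2)
    simpa [inv_div, div_mul_eq_mul_div] using this
  have hf : deriv (fun x : ℝ => (1 - (1 + K / x) / Tc) * (Real.log (a / x) / Real.log 2)) B = _ :=
    (h1.mul h2).deriv
  rw [hf]
  have hlogdiv : Real.log (a / B) = Real.log a - Real.log B :=
    Real.log_div ha.ne' hB0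
  have key : -(-K / B ^ 2 / Tc) * (Real.log (a / B) / Real.log 2)
      + (1 - (1 + K / B) / Tc) * (B / a * (-a / B ^ 2) / Real.log 2)
      = (K * (1 + Real.log a) - K * Real.log B - B * (Tc - 1))
        / (B ^ 2 * Tc * Real.log 2) := by
    rw [hlogdiv]
    field_simp
    ring
  rw [key, div_eq_zero_iff]
  have hden : B ^ 2 * Tc * Real.log 2 ≠ 0 := by positivity
  constructor
  · rintro (h | h)
    · linarith
    · exact absurd h hden
  · intro h; left; linarith
end

section
/- Let K > 0, T_c > 1, c > 0 be real numbers, and let 0 < γ₁ < γ₂. Suppose B₁ > 0 and B₂ > 0 satisfy the stationarity equations K·(1 + log(c γ₁ K²)) − K·log B₁ = B₁·(T_c − 1) and K·(1 + log(c γ₂ K²)) − K·log B₂ = B₂·(T_c − 1), where log is the natural logarithm. Then B₁ < B₂. -/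
/-- The optimal RIS group size is monotonically increasing in the transmit SNR `γ`:
if `B₁, B₂` solve the stationarity equation for SNRs `γ₁ < γ₂` respectively, then
`B₁ < B₂`. -/
theorem stmt13 (K Tc c γ₁ γ₂ B₁ B₂ : ℝ) (hK : 0 < K) (hTc : 1 < Tc) (hc : 0 < c)
    (hγ₁ : 0 < γ₁) (hγ : γ₁ < γ₂) (hB₁ : 0 < B₁) (hB₂ : 0 < B₂)
    (h1 : K * (1 + Real.log (c * γ₁ * K ^ 2)) - K * Real.log B₁ = B₁ * (Tc - 1))
    (h2 : K * (1 + Real.log (c * γ₂ * K ^ 2)) - K * Real.log B₂ = B₂ * (Tc - 1)) :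
    B₁ < B₂ := by
  by_contra h
  push_neg at h
  have hlogB : Real.log B₂ ≤ Real.log B₁ := Real.log_le_log hB₂ h
  have hlogγ : Real.log (c * γ₁ * K ^ 2) < Real.log (c * γ₂ * K ^ 2) := by
    apply Real.log_lt_log (by positivity)
    have := sq_pos_of_pos hK
    nlinarith [mul_pos (mul_pos hc (sub_pos.mpr hγ)) this]
  nlinarith [mul_le_mul_of_nonneg_right h (by linarith : (0:ℝ) ≤ Tc - 1),
    mul_lt_mul_of_pos_left hlogγ hK, mul_le_mul_of_nonneg_left hlogB hK.le]
end
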